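/- For every real number c with 0 < c < 1/4, the function F(c) = c − (3c − 1/2)·ln c + (1 − 4c)^{3/2}·artanh(√(1 − 4c)) has derivative at c equal to −3·ln c − 6·√(1 − 4c)·artanh(√(1 − 4c)). Consequently the probability density function of the area ratio Q on (0, 1/4) is PDF(c) = −3·ln c − 6·√(1 − 4c)·artanh(√(1 − 4c)). -/

import Mathlib

open Real

/-- The inverse hyperbolic tangent, `artanh a = (1/2)·ln((1+a)/(1−a))`. -/
noncomputable def artanh (a : ℝ) : ℝ := (1 / 2) * Real.log ((1 + a) / (1 - a))

/-- For `0 < c < 1/4`, the CDF branch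
`F(c) = c − (3c − 1/2)·ln c + (1 − 4c)^{3/2}·artanh √(1 − 4c)` has derivative
`−3·ln c − 6·√(1 − 4c)·artanh √(1 − 4c)`; this is the PDF of the area ratio on `(0, 1/4)`. -/
theorem pdf_left (c : ℝ) (hc0 : 0 < c) (hc : c < 1 / 4) :
    HasDerivAt (fun x : ℝ => x - (3 * x - 1 / 2) * Real.log x +
        (1 - 4 * x) ^ ((3 : ℝ) / 2) * _root_.artanh (Real.sqrt (1 - 4 * x)))
      (-3 * Real.log c - 6 * Real.sqrt (1 - 4 * c) * _root_.artanh (Real.sqrt (1 - 4 * c))) c := by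
  have hu0 : (0:ℝ) < 1 - 4 * c := by linarith
  have hu1 : 1 - 4 * c < 1 := by linarith
  set s : ℝ := Real.sqrt (1 - 4 * c) with hs
  have hspos : 0 < s := Real.sqrt_pos.mpr hu0
  have hs1 : s < 1 := by
    rw [hs]
    exact (Real.sqrt_lt' one_pos).mpr (by nlinarith)
  have hs2 : s * s = 1 - 4 * c := Real.mul_self_sqrt (le_of_lt hu0)
  -- building blocks
  have hu : HasDerivAt (fun x : ℝ => 1 - 4 * x) (-4) c := by
    have := ((hasDerivAt_id c).const_mul (4:ℝ)).const_sub 1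
    simpa using this
  have hsq : HasDerivAt (fun x : ℝ => Real.sqrt (1 - 4 * x)) (-4 / (2 * s)) c :=
    hu.sqrt (ne_of_gt hu0)
  have hlp : HasDerivAt (fun x : ℝ => Real.log (1 + Real.sqrt (1 - 4 * x)))
      ((-4 / (2 * s)) / (1 + s)) c := by
    have h := ((hasDerivAt_const c (1:ℝ)).add hsq).log (by show (1:ℝ) + s ≠ 0; exact ne_of_gt (by linarith))
    simpa using h
  have h1p : (1:ℝ) + s ≠ 0 := by positivity
  have h1m : (1:ℝ) - s ≠ 0 := by intro h; nlinarith
  have hlm : HasDerivAt (fun x : ℝ => Real.log (1 - Real.sqrt (1 - 4 * x)))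
      ((-(-4 / (2 * s))) / (1 - s)) c := by
    have h := ((hasDerivAt_const c (1:ℝ)).sub hsq).log h1m
    simpa using h
  have hart : HasDerivAt
      (fun x : ℝ => (1/2) * (Real.log (1 + Real.sqrt (1 - 4 * x))
        - Real.log (1 - Real.sqrt (1 - 4 * x))))
      ((1/2) * ((-4 / (2 * s)) / (1 + s) - (-(-4 / (2 * s))) / (1 - s))) c :=
    (hlp.sub hlm).const_mul _
  have hB : HasDerivAt
      (fun x : ℝ => ((1 - 4 * x) * Real.sqrt (1 - 4 * x)) *
        ((1/2) * (Real.log (1 + Real.sqrt (1 - 4 * x))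
          - Real.log (1 - Real.sqrt (1 - 4 * x)))))
      (((-4) * s + (1 - 4 * c) * (-4 / (2 * s))) *
          ((1/2) * (Real.log (1 + s) - Real.log (1 - s)))
        + ((1 - 4 * c) * s) *
          ((1/2) * ((-4 / (2 * s)) / (1 + s) - (-(-4 / (2 * s))) / (1 - s)))) c :=
    (hu.mul hsq).mul hart
  have hA : HasDerivAt (fun x : ℝ => x - (3 * x - 1 / 2) * Real.log x)
      (1 - (3 * Real.log c + (3 * c - 1/2) * c⁻¹)) c := by
    have hlin : HasDerivAt (fun x : ℝ => 3 * x - 1/2) 3 c := by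
      simpa using ((hasDerivAt_id c).const_mul (3:ℝ)).sub_const (1/2)
    have hlog : HasDerivAt Real.log c⁻¹ c := Real.hasDerivAt_log (ne_of_gt hc0)
    exact (hasDerivAt_id' c).sub (hlin.mul hlog)
  have hg := hA.add hB
  -- identify the derivative value
  have hlogdiv : Real.log ((1 + s) / (1 - s)) = Real.log (1 + s) - Real.log (1 - s) :=
    Real.log_div h1p h1m
  have hval : (1 - (3 * Real.log c + (3 * c - 1/2) * c⁻¹))
      + (((-4) * s + (1 - 4 * c) * (-4 / (2 * s))) *
          ((1/2) * (Real.log (1 + s) - Real.log (1 - s)))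
        + ((1 - 4 * c) * s) *
          ((1/2) * ((-4 / (2 * s)) / (1 + s) - (-(-4 / (2 * s))) / (1 - s))))
      = -3 * Real.log c - 6 * s * _root_.artanh s := by
    rw [_root_.artanh, hlogdiv]
    field_simp
    linear_combination (4*c*(1-s^2)*(Real.log (1+s) - Real.log (1-s)) + 8*c*s - 2*s) * hs2
  rw [hval] at hg
  -- the given function agrees with g near c
  have hev : (fun x : ℝ => x - (3 * x - 1 / 2) * Real.log x +
        (1 - 4 * x) ^ ((3 : ℝ) / 2) * _root_.artanh (Real.sqrt (1 - 4 * x)))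
      =ᶠ[nhds c] (fun x : ℝ => (x - (3 * x - 1 / 2) * Real.log x) +
        ((1 - 4 * x) * Real.sqrt (1 - 4 * x)) *
        ((1/2) * (Real.log (1 + Real.sqrt (1 - 4 * x))
          - Real.log (1 - Real.sqrt (1 - 4 * x))))) := by
    have hmem : Set.Ioo (0:ℝ) (1/4) ∈ nhds c := Ioo_mem_nhds hc0 hc
    filter_upwards [hmem] with x hx
    obtain ⟨hx0, hx4⟩ := hx
    have hux : (0:ℝ) < 1 - 4 * x := by linarith
    have hsx : Real.sqrt (1 - 4 * x) < 1 :=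
      (Real.sqrt_lt' one_pos).mpr (by nlinarith)
    have hsx0 : 0 ≤ Real.sqrt (1 - 4 * x) := Real.sqrt_nonneg _
    have hrw : (1 - 4 * x) ^ ((3 : ℝ) / 2) = (1 - 4 * x) * Real.sqrt (1 - 4 * x) := by
      rw [show (3:ℝ)/2 = 1 + 1/2 by norm_num, Real.rpow_add hux, Real.rpow_one,
        ← Real.sqrt_eq_rpow]
    have hart' : _root_.artanh (Real.sqrt (1 - 4 * x)) =
        (1/2) * (Real.log (1 + Real.sqrt (1 - 4 * x))
          - Real.log (1 - Real.sqrt (1 - 4 * x))) := by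
      rw [_root_.artanh, Real.log_div (by positivity) (by linarith)]
    rw [hrw, hart']
  exact hg.congr_of_eventuallyEq hev
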